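/- Soft-thresholding beats the parameter-free baseline: let ε ∈ (0, √(2/π)], let γ ∈ ℝ satisfy ∫_{−∞}^{ε−γ} Φ(x) dx = ε/2, and let y > 0 satisfy (2/√π)·∫_0^y exp(t²) dt = √2/(√π·ε). Then γ − ε < √2·y. In particular, the key inequality (2/√π)·(∫_0^z exp(t²) dt)·∫_{−∞}^{−√2·z} Φ(x) dx < √(2/π) holds for all z > 0. -/

import Mathlib

open MeasureTheory ProbabilityTheory Real Set Filter

noncomputable def stdNormalCDF (x : ℝ) : ℝ := ((gaussianReal 0 1) (Set.Iic x)).toReal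
noncomputable def erfi (y : ℝ) : ℝ :=
  2 / Real.sqrt Real.pi * ∫ t in (0 : ℝ)..y, Real.exp (t ^ 2)

noncomputable def npdf (x : ℝ) : ℝ := (Real.sqrt (2 * π))⁻¹ * Real.exp (-x ^ 2 / 2)

lemma npdf_eq : gaussianPDFReal 0 1 = npdf := by
  funext x; simp [gaussianPDFReal, npdf]

lemma npdf_pos (x : ℝ) : 0 < npdf x := by unfold npdf; positivity

lemma continuous_npdf : Continuous npdf := by unfold npdf; fun_prop

lemma integrable_npdf : Integrable npdf := by
  rw [← npdf_eq]; exact integrable_gaussianPDFReal 0 1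

lemma integrable_mul_npdf : Integrable (fun x => x * npdf x) := by
  have h := (integrable_mul_exp_neg_mul_sq (b := 1/2) (by norm_num)).const_mul
    ((Real.sqrt (2 * π))⁻¹)
  refine h.congr (Eventually.of_forall fun x => ?_)
  unfold npdf; ring_nf

lemma integrable_neg_mul_npdf : Integrable (fun x : ℝ => -x * npdf x) := by
  have := integrable_mul_npdf.neg
  refine this.congr (Eventually.of_forall fun x => ?_)
  show -(x * npdf x) = _; ring

lemma stdCDF_eq (x : ℝ) : stdNormalCDF x = ∫ t in Set.Iic x, npdf t := by
  rw [stdNormalCDF, gaussianReal_apply_eq_integral 0 one_ne_zero, npdf_eq,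
    ENNReal.toReal_ofReal (setIntegral_nonneg measurableSet_Iic fun t _ => (npdf_pos t).le)]

lemma cdf_nonneg (x : ℝ) : 0 ≤ stdNormalCDF x := ENNReal.toReal_nonneg

lemma tendsto_exp_neg_sq : Tendsto (fun t : ℝ => Real.exp (-t ^ 2 / 2)) atBot (nhds 0) := by
  apply Real.tendsto_exp_atBot.comp
  have hle : (fun t : ℝ => -t ^ 2 / 2) ≤ᶠ[atBot] fun t => t := by
    filter_upwards [eventually_le_atBot (-2 : ℝ)] with t ht
    nlinarith
  exact tendsto_atBot_mono' atBot hle tendsto_id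

lemma tendsto_npdf : Tendsto npdf atBot (nhds 0) := by
  have := tendsto_exp_neg_sq.const_mul ((Real.sqrt (2 * π))⁻¹)
  rw [mul_zero] at this
  exact this

lemma hasDerivAt_exp_neg_sq (t : ℝ) :
    HasDerivAt (fun t : ℝ => Real.exp (-t ^ 2 / 2)) (-t * Real.exp (-t ^ 2 / 2)) t := by
  have h : HasDerivAt (fun t : ℝ => -t ^ 2 / 2) (-t) t := by
    have := ((hasDerivAt_pow 2 t).neg.div_const 2)
    refine this.congr_deriv ?_; norm_num; ring
  simpa [mul_comm] using h.exp

lemma hasDerivAt_npdf (t : ℝ) : HasDerivAt npdf (-t * npdf t) t := by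
  have := (hasDerivAt_exp_neg_sq t).const_mul ((Real.sqrt (2 * π))⁻¹)
  refine HasDerivAt.congr_deriv (this.congr_of_eventuallyEq ?_) (by unfold npdf; ring)
  exact Eventually.of_forall fun x => by unfold npdf; ring

lemma integral_Iic_neg_mul_exp (a : ℝ) :
    ∫ t in Set.Iic a, -t * Real.exp (-t ^ 2 / 2) = Real.exp (-a ^ 2 / 2) := by
  have := integral_Iic_of_hasDerivAt_of_tendsto' (a := a)
    (f := fun t : ℝ => Real.exp (-t ^ 2 / 2)) (f' := fun t => -t * Real.exp (-t ^ 2 / 2))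
    (fun x _ => hasDerivAt_exp_neg_sq x)
    (by
      have h := (integrable_mul_exp_neg_mul_sq (b := 1/2) (by norm_num)).neg
      refine (h.congr (Eventually.of_forall fun x => ?_)).integrableOn
      show -(x * Real.exp (-(1/2) * x ^ 2)) = _
      ring_nf)
    tendsto_exp_neg_sq
  rw [this]; simp

lemma integral_Iic_neg_mul_npdf (a : ℝ) : ∫ t in Set.Iic a, -t * npdf t = npdf a := by
  unfold npdf
  rw [show (fun t : ℝ => -t * ((Real.sqrt (2 * π))⁻¹ * Real.exp (-t ^ 2 / 2)))
      = fun t => (Real.sqrt (2 * π))⁻¹ * (-t * Real.exp (-t ^ 2 / 2)) by funext t; ring]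
  rw [integral_const_mul, integral_Iic_neg_mul_exp]

lemma mills {a : ℝ} (ha : a < 0) : -a * stdNormalCDF a ≤ npdf a := by
  rw [stdCDF_eq, ← integral_const_mul, ← integral_Iic_neg_mul_npdf a]
  refine setIntegral_mono_on (integrable_npdf.integrableOn.const_mul _)
    integrable_neg_mul_npdf.integrableOn measurableSet_Iic fun t ht => ?_
  have : -a ≤ -t := by simpa using ht
  nlinarith [npdf_pos t]

lemma hasDerivAt_cdf (x : ℝ) : HasDerivAt stdNormalCDF (npdf x) x := by
  have heq : stdNormalCDF = fun u => (∫ t in Set.Iic (0:ℝ), npdf t) + ∫ t in (0:ℝ)..u, npdf t := by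
    funext u
    rw [stdCDF_eq,
      ← intervalIntegral.integral_Iic_sub_Iic integrable_npdf.integrableOn integrable_npdf.integrableOn]
    ring
  rw [heq]
  exact (intervalIntegral.integral_hasDerivAt_right
    integrable_npdf.intervalIntegrable
    continuous_npdf.stronglyMeasurable.stronglyMeasurableAtFilter
    continuous_npdf.continuousAt).const_add _

lemma continuous_cdf : Continuous stdNormalCDF :=
  continuous_iff_continuousAt.2 fun x => (hasDerivAt_cdf x).continuousAt

lemma cdf_pos (a : ℝ) : 0 < stdNormalCDF a := by
  rw [stdCDF_eq]
  refine (setIntegral_pos_iff_support_of_nonneg_ae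
    (Eventually.of_forall fun t => (npdf_pos t).le) integrable_npdf.integrableOn).2 ?_
  have : Function.support npdf = Set.univ := by
    ext t; simp [Function.support, (npdf_pos t).ne']
  rw [this, Set.univ_inter, Real.volume_Iic]
  simp

lemma integrableOn_cdf {a : ℝ} (ha : a < 0) : IntegrableOn stdNormalCDF (Set.Iic a) := by
  refine Integrable.mono' ((integrable_npdf.integrableOn).const_mul (-a)⁻¹)
    continuous_cdf.aestronglyMeasurable.restrict ?_
  filter_upwards [ae_restrict_mem measurableSet_Iic] with x hx
  rw [Real.norm_eq_abs, abs_of_nonneg (cdf_nonneg x)]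
  have hx0 : x < 0 := lt_of_le_of_lt hx ha
  have hm := mills hx0
  have h1 : -a * stdNormalCDF x ≤ -x * stdNormalCDF x :=
    mul_le_mul_of_nonneg_right (by simpa using hx) (cdf_nonneg x)
  rw [inv_mul_eq_div, le_div_iff₀ (by linarith : (0:ℝ) < -a)]
  nlinarith

lemma tendsto_mul_cdf : Tendsto (fun x => x * stdNormalCDF x) atBot (nhds 0) := by
  have h1 : Tendsto (fun x : ℝ => -npdf x) atBot (nhds 0) := by
    simpa using tendsto_npdf.neg
  refine tendsto_of_tendsto_of_tendsto_of_le_of_le' h1 tendsto_const_nhds ?_ ?_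
  · filter_upwards [eventually_lt_atBot (0:ℝ)] with x hx
    nlinarith [mills hx, cdf_nonneg x]
  · filter_upwards [eventually_lt_atBot (0:ℝ)] with x hx
    exact mul_nonpos_of_nonpos_of_nonneg hx.le (cdf_nonneg x)

lemma I_eq {a : ℝ} (ha : a < 0) :
    ∫ x in Set.Iic a, stdNormalCDF x = a * stdNormalCDF a + npdf a := by
  have key := integral_Iic_of_hasDerivAt_of_tendsto' (a := a)
    (f := fun x => x * stdNormalCDF x + npdf x) (f' := stdNormalCDF)
    (fun x _ => by
      have h1 := ((hasDerivAt_id x).mul (hasDerivAt_cdf x)).add (hasDerivAt_npdf x)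
      refine HasDerivAt.congr_deriv h1 ?_
      simp only [id_eq]; ring)
    (integrableOn_cdf ha)
    (by simpa using tendsto_mul_cdf.add tendsto_npdf)
  rw [key]; ring

lemma I_lt_npdf {a : ℝ} (ha : a < 0) : ∫ x in Set.Iic a, stdNormalCDF x < npdf a := by
  rw [I_eq ha]
  nlinarith [cdf_pos a]

lemma integral_exp_sq_le {z : ℝ} (hz : 0 < z) :
    ∫ t in (0:ℝ)..z, Real.exp (t ^ 2) ≤ Real.sqrt π / 2 * Real.exp (z ^ 2) := by
  set c := Real.sqrt π / 2 with hc
  have hπ := Real.pi_gt_three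
  have hc0 : 0 < c := by rw [hc]; positivity
  have hc2 : c ^ 2 = π / 4 := by
    rw [hc, div_pow, Real.sq_sqrt (by positivity)]; norm_num
  have hIIc : ∀ a b : ℝ, IntervalIntegrable (fun t => Real.exp (t ^ 2)) volume a b :=
    fun a b => (Real.continuous_exp.comp (continuous_pow 2)).intervalIntegrable a b
  have bound1 : ∀ u : ℝ, 0 < u → (∫ t in (0:ℝ)..u, Real.exp (t ^ 2)) ≤ u * Real.exp (u ^ 2) := by
    intro u hu
    have h := intervalIntegral.integral_mono_on hu.le (hIIc 0 u)
      (intervalIntegrable_const (c := Real.exp (u ^ 2)))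
      (fun t ht => Real.exp_le_exp.2 (by nlinarith [ht.1, ht.2]))
    simpa using h
  rcases le_total z c with h | h
  · calc (∫ t in (0:ℝ)..z, Real.exp (t ^ 2)) ≤ z * Real.exp (z ^ 2) := bound1 z hz
      _ ≤ c * Real.exp (z ^ 2) := by nlinarith [Real.exp_pos (z ^ 2)]
  · have hsplit : (∫ t in (0:ℝ)..z, Real.exp (t ^ 2))
        = (∫ t in (0:ℝ)..c, Real.exp (t ^ 2)) + ∫ t in c..z, Real.exp (t ^ 2) :=
      (intervalIntegral.integral_add_adjacent_intervals (hIIc 0 c) (hIIc c z)).symm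
    have hFTC : (∫ t in c..z, t * Real.exp (t ^ 2))
        = Real.exp (z ^ 2) / 2 - Real.exp (c ^ 2) / 2 := by
      apply intervalIntegral.integral_eq_sub_of_hasDerivAt (f := fun t => Real.exp (t ^ 2) / 2)
      · intro t _
        have := ((hasDerivAt_pow 2 t).exp).div_const 2
        refine this.congr_deriv ?_
        simp; ring
      · exact (continuous_id.mul (Real.continuous_exp.comp (continuous_pow 2))).intervalIntegrable c z
    have h2 : (∫ t in c..z, Real.exp (t ^ 2)) ≤ ∫ t in c..z, (t / c) * Real.exp (t ^ 2) := by
      refine intervalIntegral.integral_mono_on h (hIIc c z)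
        (((continuous_id.div_const c).mul
          (Real.continuous_exp.comp (continuous_pow 2))).intervalIntegrable c z)
        fun t ht => ?_
      have h1 : 1 ≤ t / c := (one_le_div hc0).2 ht.1
      nlinarith [Real.exp_pos (t ^ 2)]
    have h3 : (∫ t in c..z, (t / c) * Real.exp (t ^ 2))
        = c⁻¹ * (Real.exp (z ^ 2) / 2 - Real.exp (c ^ 2) / 2) := by
      rw [← hFTC, ← intervalIntegral.integral_const_mul]
      congr 1; funext t; ring
    have hE : Real.exp (c ^ 2) ≤ Real.exp (z ^ 2) := Real.exp_le_exp.2 (by nlinarith)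
    have hb1 := bound1 c hc0
    rw [h3] at h2
    have hcinv : c⁻¹ * c = 1 := inv_mul_cancel₀ hc0.ne'
    have hkey : c * Real.exp (c ^ 2) + c⁻¹ * (Real.exp (z ^ 2) / 2 - Real.exp (c ^ 2) / 2)
        ≤ c * Real.exp (z ^ 2) := by
      rw [← sub_nonneg]
      have heq : c * Real.exp (z ^ 2)
          - (c * Real.exp (c ^ 2) + c⁻¹ * (Real.exp (z ^ 2) / 2 - Real.exp (c ^ 2) / 2))
          = (c - c⁻¹ / 2) * (Real.exp (z ^ 2) - Real.exp (c ^ 2)) := by ring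
      rw [heq]
      refine mul_nonneg ?_ (by linarith)
      nlinarith [hcinv, hc2, hc0]
    rw [hsplit]
    linarith

lemma erfi_le_exp {z : ℝ} (hz : 0 < z) : erfi z ≤ Real.exp (z ^ 2) := by
  have hsπ : 0 < Real.sqrt π := Real.sqrt_pos.2 Real.pi_pos
  have h := integral_exp_sq_le hz
  have h2 : erfi z ≤ 2 / Real.sqrt π * (Real.sqrt π / 2 * Real.exp (z ^ 2)) := by
    unfold erfi
    exact mul_le_mul_of_nonneg_left h (by positivity)
  calc erfi z ≤ 2 / Real.sqrt π * (Real.sqrt π / 2 * Real.exp (z ^ 2)) := h2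
    _ = Real.exp (z ^ 2) := by field_simp

lemma erfi_pos {z : ℝ} (hz : 0 < z) : 0 < erfi z := by
  have hsπ : 0 < Real.sqrt π := Real.sqrt_pos.2 Real.pi_pos
  have := intervalIntegral.intervalIntegral_pos_of_pos (f := fun t => Real.exp (t ^ 2)) (a := 0) (b := z)
    ((Real.continuous_exp.comp (continuous_pow 2)).intervalIntegrable 0 z)
    (fun x => Real.exp_pos _) hz
  unfold erfi
  positivity

/-- **Lemma E.3 (soft-thresholding beats the parameter-free baseline)**: for
`ε ∈ (0, √(2/π)]`, if `γ` satisfies `∫_{−∞}^{ε−γ} Φ(x) dx = ε/2` and `y > 0` satisfies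
`erfi(y) = √2/(√π ε)`, then `γ − ε < √2 y`. Moreover, the key inequality
`erfi(z) · ∫_{−∞}^{−√2 z} Φ(x) dx < √(2/π)` holds for all `z > 0`. -/
theorem soft_thresholding_beats_baseline
    (ε : ℝ) (hε : ε ∈ Set.Ioc 0 (Real.sqrt (2 / Real.pi)))
    (γ : ℝ) (hγ : (∫ x in Set.Iic (ε - γ), stdNormalCDF x) = ε / 2)
    (y : ℝ) (hy : 0 < y)
    (herfi : erfi y = Real.sqrt 2 / (Real.sqrt Real.pi * ε)) :
    γ - ε < Real.sqrt 2 * y ∧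
      ∀ z : ℝ, 0 < z →
        erfi z * (∫ x in Set.Iic (-(Real.sqrt 2 * z)), stdNormalCDF x) <
          Real.sqrt (2 / Real.pi) := by
  obtain ⟨hε0, _⟩ := hε
  have hπ0 : (0:ℝ) < π := Real.pi_pos
  have hsπ : 0 < Real.sqrt π := Real.sqrt_pos.2 hπ0
  have hs2 : 0 < Real.sqrt 2 := Real.sqrt_pos.2 (by norm_num)
  have hs2sq : Real.sqrt 2 * Real.sqrt 2 = 2 := Real.mul_self_sqrt (by norm_num)
  have h2π : Real.sqrt (2 * π) = Real.sqrt 2 * Real.sqrt π := Real.sqrt_mul (by norm_num) π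
  -- key inequality with constant (√(2π))⁻¹
  have key : ∀ z : ℝ, 0 < z →
      erfi z * (∫ x in Set.Iic (-(Real.sqrt 2 * z)), stdNormalCDF x)
        < (Real.sqrt (2 * π))⁻¹ := by
    intro z hz
    have ha : -(Real.sqrt 2 * z) < 0 := by nlinarith
    have hI := I_lt_npdf ha
    have hnpdf : npdf (-(Real.sqrt 2 * z)) = (Real.sqrt (2 * π))⁻¹ * Real.exp (-z ^ 2) := by
      unfold npdf
      have hsq : (-(Real.sqrt 2 * z)) ^ 2 = 2 * z ^ 2 := by
        rw [neg_pow, mul_pow, Real.sq_sqrt (by norm_num : (0:ℝ) ≤ 2)]; ring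
      rw [hsq]
      congr 1
      ring_nf
    calc erfi z * (∫ x in Set.Iic (-(Real.sqrt 2 * z)), stdNormalCDF x)
        < erfi z * npdf (-(Real.sqrt 2 * z)) := mul_lt_mul_of_pos_left hI (erfi_pos hz)
      _ ≤ Real.exp (z ^ 2) * npdf (-(Real.sqrt 2 * z)) :=
          mul_le_mul_of_nonneg_right (erfi_le_exp hz) (npdf_pos _).le
      _ = (Real.sqrt (2 * π))⁻¹ := by
          rw [hnpdf, ← mul_assoc, mul_comm (Real.exp (z ^ 2)), mul_assoc, ← Real.exp_add]
          simp
  constructor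
  · by_contra hcon
    push_neg at hcon
    have hkey := key y hy
    rw [herfi] at hkey
    have hmono : (∫ x in Set.Iic (ε - γ), stdNormalCDF x)
        ≤ ∫ x in Set.Iic (-(Real.sqrt 2 * y)), stdNormalCDF x := by
      refine setIntegral_mono_set (integrableOn_cdf (by nlinarith : -(Real.sqrt 2 * y) < 0))
        (Eventually.of_forall fun x => cdf_nonneg x) ?_
      exact (Set.Iic_subset_Iic.2 (by linarith)).eventuallyLE
    rw [hγ] at hmono
    have hpos : 0 < Real.sqrt 2 / (Real.sqrt π * ε) := by positivity
    have heq : Real.sqrt 2 / (Real.sqrt π * ε) * (ε / 2) = (Real.sqrt (2 * π))⁻¹ := by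
      rw [h2π]
      have hsq2 : Real.sqrt 2 ^ 2 = 2 := Real.sq_sqrt (by norm_num)
      field_simp
      linear_combination hsq2
    have : (Real.sqrt (2 * π))⁻¹ ≤ Real.sqrt 2 / (Real.sqrt π * ε)
        * (∫ x in Set.Iic (-(Real.sqrt 2 * y)), stdNormalCDF x) := by
      rw [← heq]
      exact mul_le_mul_of_nonneg_left hmono hpos.le
    linarith
  · intro z hz
    have h1 := key z hz
    have h2 : Real.sqrt (2 / π) = 2 * (Real.sqrt (2 * π))⁻¹ := by
      rw [Real.sqrt_div (by norm_num : (0:ℝ) ≤ 2) π, h2π]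
      field_simp
      linear_combination hs2sq
    have hinv : 0 < (Real.sqrt (2 * π))⁻¹ := by positivity
    rw [h2]
    linarith
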